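/- Consider the star quiver Q with one source v₀ and countably many arrows v₀ → vᵢ (i ≥ 1), over R = ℤ with the usual torsion theory. For each i ≥ 1 let Eᵢ be the representation with ℚ at vertices v₀ and vᵢ and 0 elsewhere (identity on the arrow v₀ → vᵢ, zero otherwise). Then each Eᵢ is a torsion free injective representation, but the direct sum ⊕_{i≥1} Eᵢ is not an injective representation, since the induced map ℚ^{(ℕ)} → ℚ^{ℕ} is not a split epimorphism. -/

import Mathlib

open CategoryTheory CategoryTheory.Limits
/-- The star quiver: one source `none` and an arrow `none ⟶ some j` for every
`j : ℕ` (no other arrows). -/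
instance starQuiver : Quiver.{0} (Option ℕ) :=
  ⟨fun a b => PLift (a = none ∧ b ≠ none)⟩

instance (a b : Option ℕ) : Subsingleton (a ⟶ b) :=
  ⟨fun ⟨x⟩ ⟨y⟩ => rfl⟩

def starArrow (j : ℕ) : (none : Option ℕ) ⟶ some j := ⟨⟨rfl, by simp⟩⟩

def pathsNatTrans {C : Type*} [Category C] (X Y : Paths (Option ℕ) ⥤ C)
    (app : ∀ v : Option ℕ, X.obj ((Paths.of (Option ℕ)).obj v) ⟶ Y.obj ((Paths.of (Option ℕ)).obj v))
    (h : ∀ (a b : Option ℕ) (e : a ⟶ b),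
      X.map e.toPath ≫ app b = app a ≫ Y.map e.toPath) : X ⟶ Y where
  app v := app v
  naturality := fun (a : Option ℕ) (b : Option ℕ) (p : Quiver.Path a b) => by
    induction p with
    | nil =>
        show X.map (𝟙 ((Paths.of (Option ℕ)).obj a)) ≫ _ = _ ≫ Y.map (𝟙 ((Paths.of (Option ℕ)).obj a))
        simp
    | @cons c d p e ih =>
        let q : (Paths.of (Option ℕ)).obj c ⟶ (Paths.of (Option ℕ)).obj d := Quiver.Hom.toPath (V := Option ℕ) e
        have he : (Quiver.Path.cons p e : (Paths.of (Option ℕ)).obj a ⟶ (Paths.of (Option ℕ)).obj d) = (p : (Paths.of (Option ℕ)).obj a ⟶ (Paths.of (Option ℕ)).obj c) ≫ q := rfl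
        erw [he]; erw [X.map_comp, Y.map_comp, Category.assoc, h c d e, ← Category.assoc, ih,
          Category.assoc]
        rfl

@[simp] lemma pathsNatTrans_app {C : Type*} [Category C] (X Y : Paths (Option ℕ) ⥤ C)
    (app) (h) (v : Option ℕ) : (pathsNatTrans X Y app h).app ((Paths.of (Option ℕ)).obj v) = app v := rfl

/-- The component of the representation `Eᵢ`: the module `ℚ` at the vertices
`none` (= `v₀`) and `some i` (= `vᵢ`), and `0` elsewhere. -/
def starSub (i : ℕ) (v : Option ℕ) : Submodule ℤ ℚ :=
  if v = none ∨ v = some i then ⊤ else ⊥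

/-- The arrow maps of `Eᵢ`: the identity on the arrow `none ⟶ some i`, zero
otherwise. -/
def starMapAux (i : ℕ) (a b : Option ℕ) : (starSub i a) →ₗ[ℤ] (starSub i b) :=
  if h : b = some i then
    { toFun := fun x => ⟨x.1, by simp [starSub, h]⟩
      map_add' := fun x y => rfl
      map_smul' := fun c x => rfl }
  else 0

/-- The representation `Eᵢ` of the star quiver. -/
def starRep (i : ℕ) : Paths (Option ℕ) ⥤ ModuleCat.{0,0} ℤ :=
  Paths.lift
    { obj := fun v => ModuleCat.of ℤ (starSub i v)
      map := fun {a b} _ => ModuleCat.ofHom (starMapAux i a b) }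

lemma starSub_top {i : ℕ} {v : Option ℕ} (h : v = none ∨ v = some i) :
    starSub i v = ⊤ := if_pos h

lemma starSub_bot {i : ℕ} {v : Option ℕ} (h : ¬(v = none ∨ v = some i)) :
    starSub i v = ⊥ := if_neg h

lemma starSub_allEq {i : ℕ} {v : Option ℕ} (h : ¬(v = none ∨ v = some i))
    (x y : (starSub i v)) : x = y := by
  have h0 := (Submodule.eq_bot_iff _).1 (starSub_bot h)
  exact Subtype.ext ((h0 _ x.2).trans (h0 _ y.2).symm)

lemma starRep_obj (i : ℕ) (v : Option ℕ) :
    (starRep i).obj ((Paths.of (Option ℕ)).obj v) = ModuleCat.of ℤ (starSub i v) := rfl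

lemma starRep_map_toPath (i : ℕ) {a b : Option ℕ} (e : a ⟶ b) :
    (starRep i).map e.toPath = ModuleCat.ofHom (starMapAux i a b) :=
  Paths.lift_toPath _ e

/-- the unique morphism `v ⟶ some i` for `v ∈ {none, some i}` in the path category -/
def starPathTo (i : ℕ) : ∀ (v : Option ℕ), v = none ∨ v = some i →
    (((Paths.of (Option ℕ)).obj v) ⟶ ((Paths.of (Option ℕ)).obj (some i)))
  | none, _ => (starArrow i).toPath
  | some j, h => eqToHom (by rcases h with h | h
                             · exact absurd h (by simp)
                             · rw [Option.some_inj.mp h])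

def toStarSub (i : ℕ) (v : Option ℕ) (hv : v = none ∨ v = some i) :
    ModuleCat.of ℤ ℚ ⟶ (starRep i).obj ((Paths.of (Option ℕ)).obj v) :=
  ModuleCat.ofHom (LinearMap.codRestrict (starSub i v) LinearMap.id
    (fun y => by rw [starSub_top hv]; trivial))

@[simp] lemma toStarSub_apply (i : ℕ) (v : Option ℕ) (hv) (q : ℚ) :
    (toStarSub i v hv q).val = q := rfl

noncomputable def extApp (i : ℕ) (Y : Paths (Option ℕ) ⥤ ModuleCat.{0,0} ℤ)
    (ext : Y.obj ((Paths.of (Option ℕ)).obj (some i)) ⟶ ModuleCat.of ℤ ℚ) (v : Option ℕ) :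
    Y.obj ((Paths.of (Option ℕ)).obj v) ⟶ (starRep i).obj ((Paths.of (Option ℕ)).obj v) :=
  if hv : v = none ∨ v = some i then
    Y.map (starPathTo i v hv) ≫ ext ≫ toStarSub i v hv
  else 0

lemma extApp_apply (i : ℕ) (Y : Paths (Option ℕ) ⥤ ModuleCat.{0,0} ℤ)
    (ext : Y.obj ((Paths.of (Option ℕ)).obj (some i)) ⟶ ModuleCat.of ℤ ℚ) (v : Option ℕ)
    (hv : v = none ∨ v = some i) (y : Y.obj ((Paths.of (Option ℕ)).obj v)) :
    (extApp i Y ext v y).val = ext (Y.map (starPathTo i v hv) y) := by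
  simp only [extApp]; rw [dif_pos hv]; rfl

lemma starPathTo_some (i : ℕ) (h : (some i : Option ℕ) = none ∨ some i = some i) :
    starPathTo i (some i) h = 𝟙 _ := by
  simp [starPathTo]

instance ratInjective : Injective (ModuleCat.of ℤ ℚ) :=
  haveI : Module.Injective ℤ ℚ := Module.Baer.injective (Module.Baer.of_divisible ℚ)
  Module.injective_object_of_injective_module ℤ ℚ

theorem starRep_injective (i : ℕ) : Injective (starRep i) := by
  constructor
  intro X Y g f hf
  obtain ⟨ext0, hext0⟩ := Injective.factors
    (g.app ((Paths.of (Option ℕ)).obj (some i)) ≫ ModuleCat.ofHom (starSub i (some i)).subtype)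
    (f.app ((Paths.of (Option ℕ)).obj (some i)))
  refine ⟨pathsNatTrans Y (starRep i) (extApp i Y ext0) ?_, ?_⟩
  · intro a b e
    obtain ⟨rfl, hb⟩ := e.down
    obtain ⟨j, rfl⟩ := Option.ne_none_iff_exists'.1 hb
    by_cases hj : j = i
    · subst hj
      have he : e = starArrow j := Subsingleton.elim _ _
      subst he
      ext y
      apply Subtype.ext
      have h1 : (extApp j Y ext0 (some j) (Y.map (starArrow j).toPath y)).val
          = ext0 (Y.map (starPathTo j (some j) (Or.inr rfl))
              (Y.map (starArrow j).toPath y)) :=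
        extApp_apply j Y ext0 (some j) (Or.inr rfl) _
      have h2 : (extApp j Y ext0 none y).val
          = ext0 (Y.map (starPathTo j none (Or.inl rfl)) y) :=
        extApp_apply j Y ext0 none (Or.inl rfl) y
      simp only [starPathTo_some, CategoryTheory.Functor.map_id] at h1
      show (extApp j Y ext0 (some j) (Y.map (starArrow j).toPath y)).val
        = (((starRep j).map ((starArrow j).toPath)) ((extApp j Y ext0 none) y)).val
      rw [starRep_map_toPath]
      show _ = ((starMapAux j none (some j)) (extApp j Y ext0 none y)).val
      rw [starMapAux, dif_pos rfl]
      show _ = (extApp j Y ext0 none y).val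
      rw [h1, h2]
      rfl
    · have hns : ¬((some j : Option ℕ) = none ∨ some j = some i) := by simp [hj]
      ext y
      exact starSub_allEq hns _ _
  · ext v y
    cases v with
    | some j =>
      by_cases hj : j = i
      · subst hj
        apply Subtype.ext
        have h1 : (extApp j Y ext0 (some j) (f.app ((Paths.of (Option ℕ)).obj (some j)) y)).val
            = ext0 (Y.map (starPathTo j (some j) (Or.inr rfl))
                (f.app ((Paths.of (Option ℕ)).obj (some j)) y)) :=
          extApp_apply j Y ext0 (some j) (Or.inr rfl) _
        simp only [starPathTo_some, CategoryTheory.Functor.map_id] at h1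
        have h2 := ConcreteCategory.congr_hom hext0 y
        simp only [CategoryTheory.comp_apply] at h2
        show (extApp j Y ext0 (some j) (f.app ((Paths.of (Option ℕ)).obj (some j)) y)).val
          = ((g.app ((Paths.of (Option ℕ)).obj (some j))) y).val
        exact h1.trans h2
      · have hns : ¬((some j : Option ℕ) = none ∨ some j = some i) := by simp [hj]
        exact starSub_allEq hns _ _
    | none =>
      apply Subtype.ext
      have h2 : (extApp i Y ext0 none (f.app ((Paths.of (Option ℕ)).obj none) y)).val
          = ext0 (Y.map (starPathTo i none (Or.inl rfl)) (f.app ((Paths.of (Option ℕ)).obj none) y)) :=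
        extApp_apply i Y ext0 none (Or.inl rfl) _
      have hfn := ConcreteCategory.congr_hom (f.naturality ((starArrow i).toPath)) y
      have hgn := ConcreteCategory.congr_hom (g.naturality ((starArrow i).toPath)) y
      have hx := ConcreteCategory.congr_hom hext0 (X.map ((starArrow i).toPath) y)
      simp only [CategoryTheory.comp_apply] at hfn hgn hx
      show (extApp i Y ext0 none (f.app ((Paths.of (Option ℕ)).obj none) y)).val
        = ((g.app ((Paths.of (Option ℕ)).obj none)) y).val
      rw [h2]
      have c1 : ext0 (Y.map (starPathTo i none (Or.inl rfl)) (f.app ((Paths.of (Option ℕ)).obj none) y))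
          = ext0 (f.app ((Paths.of (Option ℕ)).obj (some i)) (X.map ((starArrow i).toPath) y)) :=
        congrArg ext0 hfn.symm
      have c3 : (g.app ((Paths.of (Option ℕ)).obj (some i)) (X.map ((starArrow i).toPath) y))
          = ((starRep i).map ((starArrow i).toPath)) (g.app ((Paths.of (Option ℕ)).obj none) y) := hgn
      have c4 : (((starRep i).map ((starArrow i).toPath)) (g.app ((Paths.of (Option ℕ)).obj none) y)).val
          = ((g.app ((Paths.of (Option ℕ)).obj none)) y).val := by
        rw [starRep_map_toPath]
        show ((starMapAux i none (some i)) (g.app ((Paths.of (Option ℕ)).obj none) y)).val = _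
        rw [starMapAux, dif_pos rfl]
        rfl
      rw [c1]
      exact (hx.trans (congrArg Subtype.val c3)).trans c4

lemma starRep_torsionFree (i : ℕ) (v : Option ℕ) (n : ℤ)
    (x : (starRep i).obj ((Paths.of (Option ℕ)).obj v)) (hn : n ≠ 0) (h0 : n • x = 0) : x = 0 := by
  have hx : n • (Subtype.val x) = (0 : ℚ) := congrArg Subtype.val h0
  rcases smul_eq_zero.mp hx with h | h
  · exact absurd h hn
  · exact Subtype.ext h

/-! ### Part 3 : the coproduct is not injective -/

abbrev Idx : Type := {i : ℕ // 1 ≤ i}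

noncomputable abbrev Fam : Idx → (Paths (Option ℕ) ⥤ ModuleCat.{0,0} ℤ) :=
  fun i => starRep i.1

/-- the source subrepresentation data -/
def sub2 (v : Option ℕ) : Submodule ℤ ℚ := if v = none then ⊥ else ⊤

def srcRep : Paths (Option ℕ) ⥤ ModuleCat.{0,0} ℤ :=
  Paths.lift
    { obj := fun v => ModuleCat.of ℤ (sub2 v)
      map := fun {a b} _ => 0 }

def tgtRep : Paths (Option ℕ) ⥤ ModuleCat.{0,0} ℤ :=
  Paths.lift
    { obj := fun _ => ModuleCat.of ℤ ℚ
      map := fun {a b} _ => 𝟙 _ }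

lemma sub2_none_eq (x : (sub2 none)) : x = 0 := by
  have h0 := (Submodule.eq_bot_iff _).1 (show sub2 none = ⊥ from if_pos rfl)
  exact Subtype.ext (h0 _ x.2)

def inclRep : srcRep ⟶ tgtRep :=
  pathsNatTrans srcRep tgtRep (fun v => ModuleCat.ofHom (sub2 v).subtype) (by
    intro a b e
    obtain ⟨rfl, hb⟩ := e.down
    ext x
    rw [sub2_none_eq x]
    exact (map_zero _).trans (map_zero _).symm)

instance inclRep_mono : Mono inclRep := by
  have : ∀ (v : Paths (Option ℕ)), Mono (inclRep.app v) := by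
    intro v
    rw [ModuleCat.mono_iff_injective]
    exact fun x y h => Subtype.ext h
  exact NatTrans.mono_of_mono_app _

lemma mem_starSub_some (j : ℕ) (q : ℚ) : q ∈ starSub j (some j) := by
  rw [starSub_top (Or.inr rfl)]; trivial

lemma mem_sub2_some (j : ℕ) (q : ℚ) : q ∈ sub2 (some j) := by
  rw [show sub2 (some j) = ⊤ from if_neg (by simp)]; trivial

noncomputable def gApp : ∀ v : Option ℕ,
    srcRep.obj ((Paths.of (Option ℕ)).obj v) ⟶ (∐ Fam).obj ((Paths.of (Option ℕ)).obj v)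
  | none => 0
  | some j =>
    if hj : 1 ≤ j then
      ModuleCat.ofHom (LinearMap.codRestrict (starSub j (some j)) (sub2 (some j)).subtype
        (fun x => mem_starSub_some j _))
      ≫ (Sigma.ι Fam ⟨j, hj⟩).app ((Paths.of (Option ℕ)).obj (some j))
    else 0

noncomputable def gMap : srcRep ⟶ ∐ Fam :=
  pathsNatTrans _ _ gApp (by
    intro a b e
    obtain ⟨rfl, hb⟩ := e.down
    ext x
    rw [sub2_none_eq x]
    have h1 : srcRep.map e.toPath = 0 := Paths.lift_toPath _ e
    exact (map_zero _).trans (map_zero _).symm)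

theorem coprod_not_injective : ¬ Injective (∐ Fam) := by
  classical
  intro hS
  obtain ⟨h, hh⟩ := hS.factors gMap inclRep
  -- the evaluation functor at the source vertex
  set ev := (evaluation (Paths (Option ℕ)) (ModuleCat.{0,0} ℤ)).obj ((Paths.of (Option ℕ)).obj none) with hev
  set Z : Idx → ModuleCat.{0,0} ℤ := fun i => (Fam i).obj ((Paths.of (Option ℕ)).obj none) with hZ
  let w : Discrete.functor Fam ⋙ ev ≅ Discrete.functor Z :=
    Discrete.natIso fun i => Iso.refl _
  let e : (∐ Fam).obj ((Paths.of (Option ℕ)).obj none) ≅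
      ModuleCat.of ℤ (DirectSum Idx fun i => ↥(Z i)) :=
    preservesColimitIso ev (Discrete.functor Fam) ≪≫
      HasColimit.isoOfNatIso w ≪≫ ModuleCat.coprodIsoDirectSum Z
  have key : ∀ k : Idx, (Sigma.ι Fam k).app ((Paths.of (Option ℕ)).obj none) ≫ e.hom
      = ModuleCat.ofHom (DirectSum.lof ℤ Idx (fun i => ↥(Z i)) k) := by
    intro k
    change ev.map (colimit.ι (Discrete.functor Fam) ⟨k⟩) ≫ (preservesColimitIso ev (Discrete.functor Fam)).hom ≫ (HasColimit.isoOfNatIso w).hom ≫ (ModuleCat.coprodIsoDirectSum Z).hom = _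
    erw [ι_preservesColimitIso_hom_assoc, HasColimit.isoOfNatIso_ι_hom_assoc]
    erw [← ModuleCat.ι_coprodIsoDirectSum_hom Z k]
    simp [w]
  have invkey : ∀ (k : Idx) (x : ↥(Z k)),
      (Sigma.ι Fam k).app ((Paths.of (Option ℕ)).obj none) x
        = e.inv (DirectSum.lof ℤ Idx (fun i => ↥(Z i)) k x) := by
    intro k x
    have h0 : e.hom ((Sigma.ι Fam k).app ((Paths.of (Option ℕ)).obj none) x)
        = DirectSum.lof ℤ Idx (fun i => ↥(Z i)) k x := ConcreteCategory.congr_hom (key k) x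
    rw [← h0]
    exact (ConcreteCategory.congr_hom e.hom_inv_id
      (((Sigma.ι Fam k).app ((Paths.of (Option ℕ)).obj none)) x)).symm
  -- the element of the coproduct at the source vertex
  set y := h.app ((Paths.of (Option ℕ)).obj none) (show ↑(tgtRep.obj ((Paths.of (Option ℕ)).obj none)) from (1 : ℚ))
    with hy0
  set d : DirectSum Idx (fun i => ↥(Z i)) := e.hom y with hd0
  -- choose an index outside the support
  set j := (DFinsupp.support d).sup (fun k : Idx => k.1) + 1 with hj0
  have hj : 1 ≤ j := Nat.succ_le_succ (Nat.zero_le _)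
  have hout : (⟨j, hj⟩ : Idx) ∉ DFinsupp.support d := by
    intro hmem
    have hle : j ≤ (DFinsupp.support d).sup (fun k : Idx => k.1) :=
      Finset.le_sup (f := fun k : Idx => k.1) hmem
    omega
  -- y is a finite sum of images of the coproduct injections
  have hy : y = ∑ k ∈ DFinsupp.support d,
      (Sigma.ι Fam k).app ((Paths.of (Option ℕ)).obj none) (d k) := by
    have h1 : y = e.inv d := by
      rw [hd0]; exact (ConcreteCategory.congr_hom e.hom_inv_id y).symm
    rw [h1]
    conv_lhs => rw [← DirectSum.sum_support_of d]
    rw [map_sum e.inv.hom]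
    exact Finset.sum_congr rfl fun k _ => by
      rw [invkey k (d k), DirectSum.lof_eq_of]
  -- hence its image under the j-th arrow is zero
  have hzero : (∐ Fam).map ((starArrow j).toPath) y = 0 := by
    erw [hy, map_sum (ConcreteCategory.hom ((∐ Fam).map ((starArrow j).toPath)))]
    apply Finset.sum_eq_zero
    intro k hk
    have hzero2 : (Fam k).map ((starArrow j).toPath) (d k) = 0 := by
      rw [starRep_map_toPath]
      show starMapAux k.1 none (some j) (d k) = 0
      rw [starMapAux, dif_neg]
      · rfl
      · intro hc
        apply hout
        have : k = ⟨j, hj⟩ := Subtype.ext (Option.some_inj.mp hc).symm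
        rwa [this] at hk
    have hnat := ConcreteCategory.congr_hom
      ((Sigma.ι Fam k).naturality ((starArrow j).toPath)) (d k)
    simp only [CategoryTheory.comp_apply] at hnat
    exact hnat.symm.trans ((congrArg (fun z => (Sigma.ι Fam k).app ((Paths.of (Option ℕ)).obj (some j)) z) hzero2).trans (map_zero _))
  -- but by naturality of the extension it is the image of `1` in the j-th component
  have hstar : (∐ Fam).map ((starArrow j).toPath) y
      = (Sigma.ι Fam ⟨j, hj⟩).app ((Paths.of (Option ℕ)).obj (some j))
          ⟨(1 : ℚ), mem_starSub_some j 1⟩ := by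
    have hnat := ConcreteCategory.congr_hom (h.naturality ((starArrow j).toPath))
      (show ↑(tgtRep.obj ((Paths.of (Option ℕ)).obj none)) from (1 : ℚ))
    have htgt : tgtRep.map ((starArrow j).toPath) = 𝟙 _ := Paths.lift_toPath _ _
    have hcomp := ConcreteCategory.congr_hom (NatTrans.congr_app hh ((Paths.of (Option ℕ)).obj (some j)))
      (⟨(1 : ℚ), mem_sub2_some j 1⟩ : ↥(sub2 (some j)))
    have hg : gMap.app ((Paths.of (Option ℕ)).obj (some j)) (⟨(1 : ℚ), mem_sub2_some j 1⟩ : ↥(sub2 (some j)))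
        = (Sigma.ι Fam ⟨j, hj⟩).app ((Paths.of (Option ℕ)).obj (some j))
            ⟨(1 : ℚ), mem_starSub_some j 1⟩ := by
      show gApp (some j) _ = _
      simp only [gApp]
      rw [dif_pos hj]
      rfl
    refine hnat.symm.trans (Eq.trans ?_ (hcomp.trans hg))
    rw [htgt]; rfl
  rw [hzero] at hstar
  -- a retraction of the j-th injection
  let r : (∐ Fam) ⟶ Fam ⟨j, hj⟩ :=
    Sigma.desc (fun k => if hkj : k = ⟨j, hj⟩ then eqToHom (by rw [hkj]) else 0)
  have hr : Sigma.ι Fam ⟨j, hj⟩ ≫ r = 𝟙 _ := by simp [r]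
  have hone : r.app ((Paths.of (Option ℕ)).obj (some j))
      ((Sigma.ι Fam ⟨j, hj⟩).app ((Paths.of (Option ℕ)).obj (some j))
        (⟨(1 : ℚ), mem_starSub_some j 1⟩ : ↥(starSub j (some j))))
      = (⟨(1 : ℚ), mem_starSub_some j 1⟩ : ↥(starSub j (some j))) :=
    ConcreteCategory.congr_hom (NatTrans.congr_app hr ((Paths.of (Option ℕ)).obj (some j)))
      (⟨(1 : ℚ), mem_starSub_some j 1⟩ : ↥(starSub j (some j)))
  erw [← hstar] at hone
  have h0 : ((⟨(1 : ℚ), mem_starSub_some j 1⟩ : ↥(starSub j (some j)))) = 0 :=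
    hone.symm.trans (map_zero _)
  exact one_ne_zero (congrArg Subtype.val h0)

/-- For the star quiver with source `v₀` and countably many arrows
`v₀ ⟶ vᵢ`, over `R = ℤ` with the usual torsion theory, each representation `Eᵢ`
(with `ℚ` at `v₀` and `vᵢ` and `0` elsewhere) is injective and componentwise
torsion free, but the direct sum `⊕_{i ≥ 1} Eᵢ` is not an injective
representation. -/
theorem stmt10 :
    (∀ i : ℕ, 1 ≤ i → Injective (starRep i)) ∧
    (∀ i : ℕ, 1 ≤ i → ∀ (v : Option ℕ) (n : ℤ)
        (x : (starRep i).obj ((Paths.of (Option ℕ)).obj v)), n ≠ 0 → n • x = 0 → x = 0) ∧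
    ¬ Injective (∐ fun i : {i : ℕ // 1 ≤ i} => starRep i.1) := by
  exact ⟨fun i _ => starRep_injective i,
    fun i _ v n x hn h0 => starRep_torsionFree i v n x hn h0,
    coprod_not_injective⟩
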